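/- Law of large numbers for the Reverse Firework process: if μ := 1 + ∑_{j≥1} ∏_{i=0}^{j-1} α_i < ∞, then N(n)/n → 1/μ almost surely, where N(n) = ∑_{i=1}^n ζ_i is the number of spreaders among sites 1,...,n. -/

import Mathlib

open MeasureTheory ProbabilityTheory Filter Finset
open scoped ENNReal Topology

set_option linter.unusedSectionVars false
namespace RumorFW

variable {Ω : Type*} [MeasurableSpace Ω]

/-- first `j ≥ 1` with `R (p+j) ≥ j`; `0` if no such `j` exists. -/
noncomputable def gap (R : ℕ → Ω → ℕ) (p : ℕ) (ω : Ω) : ℕ := sInf {j | 1 ≤ j ∧ j ≤ R (p + j) ω}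

/-- renewal times -/
noncomputable def T (R : ℕ → Ω → ℕ) : ℕ → Ω → ℕ
  | 0 => fun _ => 0
  | k + 1 => fun ω => T R k ω + gap R (T R k ω) ω

/-- gaps -/
noncomputable def G (R : ℕ → Ω → ℕ) (k : ℕ) (ω : Ω) : ℕ := gap R (T R k ω) ω

variable {R : ℕ → Ω → ℕ}

lemma T_succ (k : ℕ) (ω : Ω) : T R (k + 1) ω = T R k ω + G R k ω := rfl

lemma T_eq_sum (n : ℕ) (ω : Ω) : T R n ω = ∑ i ∈ range n, G R i ω := by
  induction n with
  | zero => rfl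
  | succ n ih => rw [T_succ, ih, Finset.sum_range_succ]

lemma gap_eq_succ_iff {p a : ℕ} {ω : Ω} :
    gap R p ω = a + 1 ↔
      (∀ j, 1 ≤ j → j ≤ a → R (p + j) ω < j) ∧ a + 1 ≤ R (p + (a + 1)) ω := by
  constructor
  · intro h
    have hne : {j | 1 ≤ j ∧ j ≤ R (p + j) ω}.Nonempty := by
      by_contra hcon
      rw [Set.not_nonempty_iff_eq_empty] at hcon
      rw [gap, hcon, Nat.sInf_empty] at h
      omega
    have hmem := Nat.sInf_mem hne
    rw [show sInf {j | 1 ≤ j ∧ j ≤ R (p + j) ω} = gap R p ω from rfl, h] at hmem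
    refine ⟨fun j h1 hj => ?_, hmem.2⟩
    by_contra hcon
    push_neg at hcon
    have hnot : j ∉ {j | 1 ≤ j ∧ j ≤ R (p + j) ω} :=
      Nat.notMem_of_lt_sInf (by rw [show sInf {j | 1 ≤ j ∧ j ≤ R (p + j) ω} = gap R p ω from rfl, h]; omega)
    exact hnot ⟨h1, hcon⟩
  · rintro ⟨h1, h2⟩
    have hmem : a + 1 ∈ {j | 1 ≤ j ∧ j ≤ R (p + j) ω} := ⟨by omega, h2⟩
    refine le_antisymm (Nat.sInf_le hmem) ?_
    by_contra hcon
    push_neg at hcon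
    have hmem' := Nat.sInf_mem ⟨_, hmem⟩
    have h1' := h1 _ hmem'.1 (by have := hcon; rw [gap] at this; omega)
    have := hmem'.2
    rw [gap] at hcon
    omega

lemma gap_eq_zero_iff {p : ℕ} {ω : Ω} :
    gap R p ω = 0 ↔ ∀ j, 1 ≤ j → R (p + j) ω < j := by
  rw [gap, Nat.sInf_eq_zero]
  constructor
  · rintro (h | h)
    · exact absurd h.1 (by omega)
    · intro j h1
      by_contra hcon
      push_neg at hcon
      exact absurd h (Set.nonempty_iff_ne_empty.1 ⟨j, h1, hcon⟩)
  · intro h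
    right
    ext j
    simp only [Set.mem_setOf_eq, Set.mem_empty_iff_false, iff_false, not_and, not_le]
    exact fun h1 => h j h1


lemma measurableSet_gap_eq (hmeas : ∀ i, Measurable (R i)) (p a : ℕ) :
    MeasurableSet {ω | gap R p ω = a} := by
  cases a with
  | zero =>
    have : {ω | gap R p ω = 0} = ⋂ j : ℕ, R (p + (j + 1)) ⁻¹' Set.Iio (j + 1) := by
      ext ω
      simp only [Set.mem_setOf_eq, gap_eq_zero_iff, Set.mem_iInter, Set.mem_preimage,
        Set.mem_Iio]
      constructor
      · intro h j; exact h (j + 1) (by omega)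
      · intro h j h1
        have := h (j - 1)
        have hj : j - 1 + 1 = j := by omega
        rwa [hj] at this
    rw [this]
    exact MeasurableSet.iInter fun j => hmeas _ trivial
  | succ a =>
    have : {ω | gap R p ω = a + 1} =
        (⋂ (j : ℕ) (_ : 1 ≤ j) (_ : j ≤ a), R (p + j) ⁻¹' Set.Iio j) ∩
          R (p + (a + 1)) ⁻¹' Set.Ici (a + 1) := by
      ext ω
      simp only [Set.mem_setOf_eq, gap_eq_succ_iff, Set.mem_inter_iff, Set.mem_iInter,
        Set.mem_preimage, Set.mem_Iio, Set.mem_Ici]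
    rw [this]
    exact ((MeasurableSet.iInter fun j => MeasurableSet.iInter fun _ =>
      MeasurableSet.iInter fun _ => hmeas _ trivial).inter (hmeas _ trivial))

lemma measurable_gap (hmeas : ∀ i, Measurable (R i)) (p : ℕ) : Measurable (gap R p) :=
  measurable_to_countable' fun a => measurableSet_gap_eq hmeas p a

lemma measurableSet_T_eq (hmeas : ∀ i, Measurable (R i)) :
    ∀ k n : ℕ, MeasurableSet {ω | T R k ω = n}
  | 0, n => by
    by_cases h : n = 0
    · subst h
      have : {ω : Ω | T R 0 ω = 0} = Set.univ := by ext ω; simp [T]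
      rw [this]; exact MeasurableSet.univ
    · have : {ω : Ω | T R 0 ω = n} = ∅ := by
        ext ω; simp [T]; omega
      rw [this]; exact MeasurableSet.empty
  | k + 1, n => by
    have : {ω | T R (k + 1) ω = n} =
        ⋃ (p : ℕ) (_ : p ≤ n), {ω | T R k ω = p} ∩ {ω | gap R p ω = n - p} := by
      ext ω
      simp only [Set.mem_setOf_eq, Set.mem_iUnion, Set.mem_inter_iff]
      constructor
      · intro h
        exact ⟨T R k ω, by rw [T_succ] at h; unfold G at h; omega, rfl,
          by rw [T_succ] at h; unfold G at h; omega⟩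
      · rintro ⟨p, hp, h1, h2⟩
        rw [T_succ]; unfold G; rw [h1]; omega
    rw [this]
    exact MeasurableSet.iUnion fun p => MeasurableSet.iUnion fun _ =>
      (measurableSet_T_eq hmeas k p).inter (measurableSet_gap_eq hmeas p _)

lemma measurable_T (hmeas : ∀ i, Measurable (R i)) (k : ℕ) : Measurable (T R k) :=
  measurable_to_countable' fun n => measurableSet_T_eq hmeas k n

lemma measurableSet_G_eq (hmeas : ∀ i, Measurable (R i)) (k a : ℕ) :
    MeasurableSet {ω | G R k ω = a} := by
  have : {ω | G R k ω = a} = ⋃ p : ℕ, {ω | T R k ω = p} ∩ {ω | gap R p ω = a} := by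
    ext ω
    simp only [Set.mem_setOf_eq, Set.mem_iUnion, Set.mem_inter_iff]
    constructor
    · intro h; exact ⟨T R k ω, rfl, h⟩
    · rintro ⟨p, h1, h2⟩; unfold G; rw [h1]; exact h2
  rw [this]
  exact MeasurableSet.iUnion fun p =>
    (measurableSet_T_eq hmeas k p).inter (measurableSet_gap_eq hmeas p a)

lemma measurable_G (hmeas : ∀ i, Measurable (R i)) (k : ℕ) : Measurable (G R k) :=
  measurable_to_countable' fun a => measurableSet_G_eq hmeas k a


/-! ### real products and gap distribution -/

/-- `∏_{i<n} α i` -/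
def ppi (α : ℕ → ℝ) (n : ℕ) : ℝ := ∏ i ∈ range n, α i

/-- distribution of a gap of length `a+1`, as `ℝ≥0∞` -/
noncomputable def qe (α : ℕ → ℝ) (a : ℕ) : ℝ≥0∞ :=
  ENNReal.ofReal (1 - α a) * ∏ j ∈ range a, ENNReal.ofReal (α j)

section ppi
variable {α : ℕ → ℝ} (h01 : ∀ k, 0 ≤ α k ∧ α k ≤ 1)
include h01

lemma ppi_nonneg (n : ℕ) : 0 ≤ ppi α n :=
  Finset.prod_nonneg fun i _ => (h01 i).1

lemma ppi_le_one (n : ℕ) : ppi α n ≤ 1 :=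
  Finset.prod_le_one (fun i _ => (h01 i).1) (fun i _ => (h01 i).2)

lemma ppi_succ (n : ℕ) : ppi α (n + 1) = ppi α n * α n := Finset.prod_range_succ _ _

lemma ppi_anti : Antitone (ppi α) := by
  apply antitone_nat_of_succ_le
  intro n
  rw [ppi_succ h01]
  calc ppi α n * α n ≤ ppi α n * 1 := by
        apply mul_le_mul_of_nonneg_left (h01 n).2 (ppi_nonneg h01 n)
    _ = ppi α n := mul_one _

lemma qe_eq (a : ℕ) : qe α a = ENNReal.ofReal (ppi α a - ppi α (a + 1)) := by
  rw [qe, ← ENNReal.ofReal_prod_of_nonneg (fun i _ => (h01 i).1),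
    ← ENNReal.ofReal_mul (by linarith [(h01 a).2]), ppi_succ h01, ppi]
  ring_nf

end ppi

/-! ### partial sums of gap lengths and block decomposition -/

/-- partial sums `t i = ∑_{j<i} (a j + 1)` -/
def tpt (a : ℕ → ℕ) (i : ℕ) : ℕ := ∑ j ∈ range i, (a j + 1)

lemma tpt_succ (a : ℕ → ℕ) (i : ℕ) : tpt a (i + 1) = tpt a i + (a i + 1) :=
  Finset.sum_range_succ _ _

lemma tpt_zero (a : ℕ → ℕ) : tpt a 0 = 0 := rfl

lemma tpt_strictMono (a : ℕ → ℕ) : StrictMono (tpt a) := by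
  apply strictMono_nat_of_lt_succ
  intro n; rw [tpt_succ]; omega

lemma le_tpt (a : ℕ → ℕ) (i : ℕ) : i ≤ tpt a i := by
  induction i with
  | zero => simp [tpt_zero]
  | succ i ih => rw [tpt_succ]; omega

/-- index of the block containing coordinate `m ≥ 1` -/
def idx (a : ℕ → ℕ) (m : ℕ) : ℕ := Nat.findGreatest (fun i => tpt a i < m) m

lemma idx_spec (a : ℕ → ℕ) {m : ℕ} (h : 1 ≤ m) :
    tpt a (idx a m) < m ∧ m ≤ tpt a (idx a m + 1) := by
  have h0 : tpt a 0 < m := by rw [tpt_zero]; omega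
  have hrfl : Nat.findGreatest (fun i => tpt a i < m) m = idx a m := rfl
  constructor
  · exact Nat.findGreatest_spec (P := fun i => tpt a i < m) (Nat.zero_le m) h0
  · by_contra hcon
    push_neg at hcon
    have hb : idx a m + 1 ≤ m := by
      have := le_tpt a (idx a m + 1); omega
    have hle := Nat.le_findGreatest (P := fun i => tpt a i < m) hb hcon
    rw [hrfl] at hle
    omega

lemma idx_eq (a : ℕ → ℕ) {i m : ℕ} (h1 : tpt a i < m) (h2 : m ≤ tpt a (i + 1)) :
    idx a m = i := by
  have hm : 1 ≤ m := by omega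
  obtain ⟨hs1, hs2⟩ := idx_spec a hm
  by_contra hne
  rcases Nat.lt_or_ge (idx a m) i with hlt | hge
  · have : tpt a (idx a m + 1) ≤ tpt a i := (tpt_strictMono a).monotone hlt
    omega
  · have hgt : i < idx a m := by omega
    have : tpt a (i + 1) ≤ tpt a (idx a m) := (tpt_strictMono a).monotone hgt
    omega

/-- the constraint set for coordinate `m` -/
def cSet (a : ℕ → ℕ) (m : ℕ) : Set ℕ :=
  if m = tpt a (idx a m + 1) then Set.Ici (m - tpt a (idx a m))
  else Set.Iio (m - tpt a (idx a m))

lemma T_eq_of (a : ℕ → ℕ) {ω : Ω} :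
    ∀ k, (∀ i < k, G R i ω = a i + 1) → T R k ω = tpt a k := by
  intro k
  induction k with
  | zero => intro _; rfl
  | succ k ih =>
    intro h
    rw [T_succ, ih (fun i hi => h i (by omega)), tpt_succ, h k (by omega)]

lemma event_iff (a : ℕ → ℕ) (k : ℕ) (ω : Ω) :
    (∀ i < k, G R i ω = a i + 1) ↔
      ∀ m ∈ Finset.Ico 1 (tpt a k + 1), R m ω ∈ cSet a m := by
  induction k with
  | zero => simp [tpt_zero]
  | succ k ih =>
    constructor
    · intro h m hm
      rw [Finset.mem_Ico] at hm
      by_cases hmk : m ≤ tpt a k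
      · exact (ih.1 fun i hi => h i (by omega)) m (Finset.mem_Ico.2 ⟨hm.1, by omega⟩)
      · push_neg at hmk
        have hm2 : m ≤ tpt a (k + 1) := by omega
        have hidx : idx a m = k := idx_eq a hmk hm2
        have hT : T R k ω = tpt a k := T_eq_of a k fun i hi => h i (by omega)
        have hG : gap R (tpt a k) ω = a k + 1 := by
          have := h k (by omega); rwa [G, hT] at this
        obtain ⟨hG1, hG2⟩ := gap_eq_succ_iff.1 hG
        rw [cSet, hidx]
        by_cases hme : m = tpt a (k + 1)
        · rw [if_pos hme]
          rw [Set.mem_Ici]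
          have hmval : m = tpt a k + (a k + 1) := by rw [hme, tpt_succ]
          rw [← hmval] at hG2
          omega
        · rw [if_neg hme]
          rw [Set.mem_Iio]
          have hj : 1 ≤ m - tpt a k ∧ m - tpt a k ≤ a k := by
            rw [tpt_succ] at hm2 hme; omega
          have := hG1 (m - tpt a k) hj.1 hj.2
          have hmm : tpt a k + (m - tpt a k) = m := by omega
          rwa [hmm] at this
    · intro h
      have hk : ∀ i < k, G R i ω = a i + 1 := by
        apply ih.2
        intro m hm
        rw [Finset.mem_Ico] at hm
        refine h m (Finset.mem_Ico.2 ⟨hm.1, ?_⟩)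
        have := (tpt_strictMono a).monotone (show k ≤ k + 1 by omega)
        omega
      have hT : T R k ω = tpt a k := T_eq_of a k hk
      have hGk : G R k ω = a k + 1 := by
        rw [G, hT]
        rw [gap_eq_succ_iff]
        constructor
        · intro j h1 hj
          have hm : tpt a k + j ∈ Finset.Ico 1 (tpt a (k + 1) + 1) := by
            rw [Finset.mem_Ico, tpt_succ]; omega
          have hmem := h _ hm
          have hidx : idx a (tpt a k + j) = k :=
            idx_eq a (by omega) (by rw [tpt_succ]; omega)
          rw [cSet, hidx, if_neg (by rw [tpt_succ]; omega)] at hmem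
          rw [Set.mem_Iio] at hmem
          omega
        · have hm : tpt a (k + 1) ∈ Finset.Ico 1 (tpt a (k + 1) + 1) := by
            rw [Finset.mem_Ico]
            have := le_tpt a (k + 1)
            omega
          have hmem := h _ hm
          have hidx : idx a (tpt a (k + 1)) = k := by
            apply idx_eq a _ le_rfl
            rw [tpt_succ]; omega
          rw [cSet, hidx, if_pos rfl, Set.mem_Ici] at hmem
          rw [tpt_succ] at hmem
          omega
      intro i hi
      rcases Nat.lt_or_ge i k with hik | hik
      · exact hk i hik
      · have hik' : i = k := by omega
        rw [hik']
        exact hGk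


/-! ### probability computations -/

section Prob

variable (P : Measure Ω) [IsProbabilityMeasure P]
variable {α : ℕ → ℝ}

lemma ppi_tendsto_zero (hsum : Summable fun j : ℕ => ppi α (j + 1)) :
    Tendsto (ppi α) atTop (𝓝 0) :=
  (tendsto_add_atTop_iff_nat 1).1 hsum.tendsto_atTop_zero

variable (hmeas : ∀ i, Measurable (R i))
  (hident : ∀ i, Measure.map (R i) P = Measure.map (R 0) P)
  (hα : ∀ k, P {ω | R 0 ω ≤ k} = ENNReal.ofReal (α k))
  (h01 : ∀ k, 0 ≤ α k ∧ α k ≤ 1)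

include hmeas hident hα in
lemma prob_le (m k : ℕ) : P (R m ⁻¹' Set.Iic k) = ENNReal.ofReal (α k) := by
  rw [← Measure.map_apply (hmeas m) trivial, hident m,
    Measure.map_apply (hmeas 0) trivial]
  have h : R 0 ⁻¹' Set.Iic k = {ω | R 0 ω ≤ k} := rfl
  rw [h, hα k]

include hmeas hident hα in
lemma prob_lt (m j : ℕ) : P (R m ⁻¹' Set.Iio (j + 1)) = ENNReal.ofReal (α j) := by
  have h : Set.Iio (j + 1) = Set.Iic j := by ext x; simp [Nat.lt_succ_iff]
  rw [h, prob_le P hmeas hident hα]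

include hmeas hident hα h01 in
lemma prob_ge (m a : ℕ) : P (R m ⁻¹' Set.Ici (a + 1)) = ENNReal.ofReal (1 - α a) := by
  have hc : Set.Ici (a + 1) = (Set.Iic a)ᶜ := by ext x; simp
  rw [hc, Set.preimage_compl, prob_compl_eq_one_sub ((hmeas m) trivial),
    prob_le P hmeas hident hα, ENNReal.ofReal_sub _ (h01 a).1, ENNReal.ofReal_one]

variable (hindep : iIndepFun R P)

include hmeas hident hα h01 in
lemma prod_coord (a : ℕ → ℕ) (k : ℕ) :
    ∏ m ∈ Finset.Ico 1 (tpt a k + 1), P (R m ⁻¹' cSet a m)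
      = ∏ i ∈ range k, qe α (a i) := by
  induction k with
  | zero => simp [tpt_zero]
  | succ k ih =>
    have hmono : tpt a k + 1 ≤ tpt a (k + 1) + 1 := by
      have := tpt_strictMono a (show k < k + 1 by omega); omega
    rw [← Finset.prod_Ico_consecutive _ (show 1 ≤ tpt a k + 1 by omega) hmono, ih,
      Finset.prod_range_succ]
    congr 1
    rw [Finset.prod_Ico_eq_prod_range]
    have hlen : tpt a (k + 1) + 1 - (tpt a k + 1) = a k + 1 := by rw [tpt_succ]; omega
    rw [hlen]
    have hfac : ∀ j ∈ range (a k + 1),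
        P (R (tpt a k + 1 + j) ⁻¹' cSet a (tpt a k + 1 + j)) =
          if j = a k then ENNReal.ofReal (1 - α (a k)) else ENNReal.ofReal (α j) := by
      intro j hj
      rw [Finset.mem_range] at hj
      have h1 : tpt a k < tpt a k + 1 + j := by omega
      have h2 : tpt a k + 1 + j ≤ tpt a (k + 1) := by rw [tpt_succ]; omega
      have hidx : idx a (tpt a k + 1 + j) = k := idx_eq a h1 h2
      rw [cSet, hidx]
      have hstep : tpt a k + 1 + j - tpt a k = j + 1 := by omega
      by_cases hj' : j = a k
      · have hme : tpt a k + 1 + j = tpt a (k + 1) := by rw [tpt_succ]; omega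
        rw [if_pos hme, if_pos hj', hstep, hj', prob_ge P hmeas hident hα h01]
      · have hme : tpt a k + 1 + j ≠ tpt a (k + 1) := by rw [tpt_succ]; omega
        rw [if_neg hme, if_neg hj', hstep, prob_lt P hmeas hident hα]
    rw [Finset.prod_congr rfl hfac, Finset.prod_range_succ, if_pos rfl]
    have hrest : ∀ j ∈ range (a k),
        (if j = a k then ENNReal.ofReal (1 - α (a k)) else ENNReal.ofReal (α j))
          = ENNReal.ofReal (α j) := by
      intro j hj; rw [Finset.mem_range] at hj; rw [if_neg (by omega)]
    rw [Finset.prod_congr rfl hrest, qe, mul_comm]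

include hmeas hident hα h01 hindep in
lemma prob_G_vec (a : ℕ → ℕ) (k : ℕ) :
    P (⋂ i ∈ range k, {ω | G R i ω = a i + 1}) = ∏ i ∈ range k, qe α (a i) := by
  have hev : (⋂ i ∈ range k, {ω | G R i ω = a i + 1})
      = ⋂ m ∈ Finset.Ico 1 (tpt a k + 1), R m ⁻¹' cSet a m := by
    ext ω
    simp only [Set.mem_iInter, Set.mem_setOf_eq, Set.mem_preimage, Finset.mem_range]
    exact ⟨fun h => (event_iff a k ω).1 h, fun h => (event_iff a k ω).2 h⟩
  rw [hev, hindep.measure_inter_preimage_eq_mul _ (fun i _ => trivial),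
    prod_coord P hmeas hident hα h01]

include hmeas hident hα h01 hindep in
lemma prob_decr (p n : ℕ) :
    P (⋂ m ∈ Finset.Ico (p + 1) (p + 1 + n), R m ⁻¹' Set.Iio (m - p))
      = ENNReal.ofReal (ppi α n) := by
  rw [hindep.measure_inter_preimage_eq_mul (sets := fun m => Set.Iio (m - p)) _
    (fun i _ => trivial)]
  rw [Finset.prod_Ico_eq_prod_range]
  have hlen : p + 1 + n - (p + 1) = n := by omega
  rw [hlen]
  have hfac : ∀ j ∈ range n,
      P (R (p + 1 + j) ⁻¹' Set.Iio (p + 1 + j - p)) = ENNReal.ofReal (α j) := by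
    intro j _
    have hstep : p + 1 + j - p = j + 1 := by omega
    rw [hstep, prob_lt P hmeas hident hα]
  rw [Finset.prod_congr rfl hfac, ← ENNReal.ofReal_prod_of_nonneg (fun i _ => (h01 i).1)]
  rfl

include hmeas hident hα h01 hindep in
lemma prob_gap_zero (hsum : Summable fun j : ℕ => ppi α (j + 1)) (p : ℕ) :
    P {ω | gap R p ω = 0} = 0 := by
  have hub : ∀ n, P {ω | gap R p ω = 0} ≤ ENNReal.ofReal (ppi α n) := by
    intro n
    rw [← prob_decr P hmeas hident hα h01 hindep p n]
    apply measure_mono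
    intro ω hω
    rw [Set.mem_setOf_eq, gap_eq_zero_iff] at hω
    simp only [Set.mem_iInter, Set.mem_preimage, Set.mem_Iio, Finset.mem_Ico]
    intro m hm
    have h := hω (m - p) (by omega)
    have hh : p + (m - p) = m := by omega
    rwa [hh] at h
  have hlim : Tendsto (fun n => ENNReal.ofReal (ppi α n)) atTop (𝓝 0) := by
    rw [← ENNReal.ofReal_zero]
    exact (ENNReal.continuous_ofReal.tendsto _).comp (ppi_tendsto_zero hsum)
  exact le_antisymm (ge_of_tendsto' hlim hub) zero_le

include hmeas hident hα h01 hindep in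
lemma prob_G_zero (hsum : Summable fun j : ℕ => ppi α (j + 1)) (k : ℕ) :
    P {ω | G R k ω = 0} = 0 := by
  apply measure_mono_null (show {ω | G R k ω = 0} ⊆ ⋃ p : ℕ, {ω | gap R p ω = 0} from ?_)
    (measure_iUnion_null fun p => prob_gap_zero P hmeas hident hα h01 hindep hsum p)
  intro ω hω
  exact Set.mem_iUnion.2 ⟨T R k ω, hω⟩

include h01 in
lemma sum_range_qe (k n : ℕ) :
    ∑ b ∈ range n, qe α (k + b) = ENNReal.ofReal (ppi α k - ppi α (k + n)) := by
  induction n with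
  | zero => simp
  | succ n ih =>
    rw [Finset.sum_range_succ, ih, qe_eq h01, ← ENNReal.ofReal_add
      (by have := ppi_anti h01 (show k ≤ k + n by omega); linarith)
      (by have := ppi_anti h01 (show k + n ≤ k + n + 1 by omega); linarith)]
    have harith : k + n + 1 = k + (n + 1) := by omega
    rw [harith]
    ring_nf

include h01 in
lemma tsum_qe_tail (hsum : Summable fun j : ℕ => ppi α (j + 1)) (k : ℕ) :
    ∑' b, qe α (k + b) = ENNReal.ofReal (ppi α k) := by
  have h1 := ENNReal.tendsto_nat_tsum (fun b => qe α (k + b))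
  have h3 : Tendsto (fun n : ℕ => ppi α k - ppi α (k + n)) atTop (𝓝 (ppi α k - 0)) := by
    apply tendsto_const_nhds.sub
    have heq : (fun n : ℕ => ppi α (k + n)) = fun n : ℕ => ppi α (n + k) := by
      funext n; rw [Nat.add_comm]
    rw [heq]
    exact (ppi_tendsto_zero hsum).comp (tendsto_add_atTop_nat k)
  rw [sub_zero] at h3
  have h2 : Tendsto (fun n : ℕ => ∑ b ∈ range n, qe α (k + b)) atTop
      (𝓝 (ENNReal.ofReal (ppi α k))) := by
    simp only [sum_range_qe h01]
    exact (ENNReal.continuous_ofReal.tendsto _).comp h3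
  exact tendsto_nhds_unique h1 h2

include h01 in
lemma tsum_qe (hsum : Summable fun j : ℕ => ppi α (j + 1)) :
    ∑' b, qe α b = 1 := by
  have := tsum_qe_tail h01 hsum 0
  simp only [Nat.zero_add] at this
  rw [this]
  have : ppi α 0 = 1 := by simp [ppi]
  rw [this, ENNReal.ofReal_one]

include hmeas hident hα h01 hindep in
lemma prob_G_margin (hsum : Summable fun j : ℕ => ppi α (j + 1)) :
    ∀ (d k : ℕ) (S : Finset ℕ), S ⊆ range k → (range k \ S).card = d →
      ∀ a : ℕ → ℕ,
        P (⋂ i ∈ S, {ω | G R i ω = a i + 1}) = ∏ i ∈ S, qe α (a i) := by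
  intro d
  induction d with
  | zero =>
    intro k S hsub hcard a
    have hS : S = range k :=
      Finset.Subset.antisymm hsub
        (Finset.sdiff_eq_empty_iff_subset.1 (Finset.card_eq_zero.1 hcard))
    rw [hS]
    exact prob_G_vec P hmeas hident hα h01 hindep a k
  | succ d ih =>
    intro k S hsub hcard a
    have hne : (range k \ S).Nonempty := Finset.card_pos.1 (by omega)
    obtain ⟨j, hj⟩ := hne
    rw [Finset.mem_sdiff] at hj
    have hAmeas : MeasurableSet (⋂ i ∈ S, {ω | G R i ω = a i + 1}) :=
      MeasurableSet.biInter (Finset.countable_toSet S)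
        (fun i _ => measurableSet_G_eq hmeas i _)
    have hU : P (⋂ i ∈ S, {ω | G R i ω = a i + 1})
        = ∑' b : ℕ, P ((⋂ i ∈ S, {ω | G R i ω = a i + 1}) ∩ {ω | G R j ω = b + 1}) := by
      have ht : MeasurableSet {ω | G R j ω = 0} := measurableSet_G_eq hmeas j 0
      rw [← measure_inter_add_diff _ ht]
      have hz : P ((⋂ i ∈ S, {ω | G R i ω = a i + 1}) ∩ {ω | G R j ω = 0}) = 0 :=
        measure_mono_null Set.inter_subset_right
          (prob_G_zero P hmeas hident hα h01 hindep hsum j)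
      rw [hz, zero_add]
      have hdiff : (⋂ i ∈ S, {ω | G R i ω = a i + 1}) \ {ω | G R j ω = 0}
          = ⋃ b : ℕ, (⋂ i ∈ S, {ω | G R i ω = a i + 1}) ∩ {ω | G R j ω = b + 1} := by
        ext ω
        simp only [Set.mem_diff, Set.mem_setOf_eq, Set.mem_iUnion, Set.mem_inter_iff]
        constructor
        · rintro ⟨h1, h2⟩
          exact ⟨G R j ω - 1, h1, by omega⟩
        · rintro ⟨b, h1, h2⟩
          exact ⟨h1, by omega⟩
      rw [hdiff]
      exact measure_iUnion
        (fun b b' hbb' => by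
          apply Set.disjoint_left.2
          rintro ω ⟨_, h1⟩ ⟨_, h2⟩
          rw [Set.mem_setOf_eq] at h1 h2
          omega)
        (fun b => hAmeas.inter (measurableSet_G_eq hmeas j _))
    rw [hU]
    have hterm : ∀ b : ℕ,
        P ((⋂ i ∈ S, {ω | G R i ω = a i + 1}) ∩ {ω | G R j ω = b + 1})
          = qe α b * ∏ i ∈ S, qe α (a i) := by
      intro b
      have hset : (⋂ i ∈ S, {ω | G R i ω = a i + 1}) ∩ {ω | G R j ω = b + 1}
          = ⋂ i ∈ insert j S, {ω | G R i ω = Function.update a j b i + 1} := by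
        ext ω
        simp only [Set.mem_inter_iff, Set.mem_iInter, Set.mem_setOf_eq, Finset.mem_insert]
        constructor
        · rintro ⟨h1, h2⟩ i hi
          rcases hi with rfl | hi
          · rwa [Function.update_self]
          · rw [Function.update_of_ne (by rintro rfl; exact hj.2 hi)]
            exact h1 i hi
        · intro h
          refine ⟨fun i hi => ?_, ?_⟩
          · have := h i (Or.inr hi)
            rwa [Function.update_of_ne (by rintro rfl; exact hj.2 hi)] at this
          · have := h j (Or.inl rfl)
            rwa [Function.update_self] at this
      rw [hset, ih k (insert j S) (Finset.insert_subset hj.1 hsub)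
        (by
          rw [Finset.sdiff_insert, Finset.card_erase_of_mem (Finset.mem_sdiff.2 hj), hcard]
          omega)
        (Function.update a j b)]
      rw [Finset.prod_insert hj.2, Function.update_self]
      congr 1
      exact Finset.prod_congr rfl fun i hi => by
        rw [Function.update_of_ne (by rintro rfl; exact hj.2 hi)]
    rw [tsum_congr hterm, ENNReal.tsum_mul_right, tsum_qe h01 hsum, one_mul]

include hmeas hident hα h01 hindep in
lemma prob_G_eq_succ (hsum : Summable fun j : ℕ => ppi α (j + 1)) (i b : ℕ) :
    P {ω | G R i ω = b + 1} = qe α b := by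
  have h := prob_G_margin P hmeas hident hα h01 hindep hsum
    ((range (i + 1) \ {i}).card) (i + 1) {i}
    (Finset.singleton_subset_iff.2 (Finset.mem_range.2 (by omega))) rfl (fun _ => b)
  simpa using h


include hmeas in
lemma map_G_singleton (n x : ℕ) :
    Measure.map (G R n) P {x} = P {ω | G R n ω = x} := by
  rw [Measure.map_apply (measurable_G hmeas n) (measurableSet_singleton x)]
  rfl

include hmeas hident hα h01 hindep in
lemma indepFun_G (hsum : Summable fun j : ℕ => ppi α (j + 1)) {i j : ℕ} (hij : i ≠ j) :
    IndepFun (G R i) (G R j) P := by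
  rw [indepFun_iff_map_prod_eq_prod_map_map (measurable_G hmeas i).aemeasurable
    (measurable_G hmeas j).aemeasurable]
  apply Measure.ext_of_singleton
  rintro ⟨b, c⟩
  have hL : Measure.map (fun ω => (G R i ω, G R j ω)) P {(b, c)}
      = P ({ω | G R i ω = b} ∩ {ω | G R j ω = c}) := by
    rw [Measure.map_apply ((measurable_G hmeas i).prodMk (measurable_G hmeas j))
      (measurableSet_singleton _)]
    congr 1
    ext ω
    simp [Set.mem_preimage, Prod.ext_iff]
  rw [hL, ← Set.singleton_prod_singleton, Measure.prod_prod,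
    map_G_singleton P hmeas, map_G_singleton P hmeas]
  match b, c with
  | 0, c =>
    rw [measure_mono_null Set.inter_subset_left
      (prob_G_zero P hmeas hident hα h01 hindep hsum i),
      prob_G_zero P hmeas hident hα h01 hindep hsum i, zero_mul]
  | b + 1, 0 =>
    rw [measure_mono_null Set.inter_subset_right
      (prob_G_zero P hmeas hident hα h01 hindep hsum j),
      prob_G_zero P hmeas hident hα h01 hindep hsum j, mul_zero]
  | b + 1, c + 1 =>
    have hsub : ({i, j} : Finset ℕ) ⊆ range (max i j + 1) := by
      intro m hm
      rw [Finset.mem_insert, Finset.mem_singleton] at hm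
      rw [Finset.mem_range]
      rcases hm with rfl | rfl
      · omega
      · omega
    have h := prob_G_margin P hmeas hident hα h01 hindep hsum
      ((range (max i j + 1) \ {i, j}).card) (max i j + 1) {i, j} hsub rfl
      (fun m => if m = i then b else c)
    have hev : (⋂ m ∈ ({i, j} : Finset ℕ),
        {ω | G R m ω = (if m = i then b else c) + 1})
        = {ω | G R i ω = b + 1} ∩ {ω | G R j ω = c + 1} := by
      ext ω
      simp only [Finset.mem_insert, Finset.mem_singleton, Set.mem_iInter,
        Set.mem_inter_iff, Set.mem_setOf_eq]
      constructor
      · intro hh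
        refine ⟨?_, ?_⟩
        · have := hh i (Or.inl rfl); rwa [if_pos rfl] at this
        · have := hh j (Or.inr rfl); rwa [if_neg (Ne.symm hij)] at this
      · rintro ⟨h1, h2⟩ m hm
        rcases hm with rfl | rfl
        · rwa [if_pos rfl]
        · rwa [if_neg (Ne.symm hij)]
    have hpr : ∏ m ∈ ({i, j} : Finset ℕ), qe α (if m = i then b else c)
        = qe α b * qe α c := by
      rw [Finset.prod_pair hij, if_pos rfl, if_neg (Ne.symm hij)]
    rw [hev, hpr] at h
    rw [h, prob_G_eq_succ P hmeas hident hα h01 hindep hsum,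
      prob_G_eq_succ P hmeas hident hα h01 hindep hsum]

include hmeas hident hα h01 hindep in
lemma identDistrib_G (hsum : Summable fun j : ℕ => ppi α (j + 1)) (i : ℕ) :
    IdentDistrib (G R i) (G R 0) P P := by
  refine ⟨(measurable_G hmeas i).aemeasurable, (measurable_G hmeas 0).aemeasurable, ?_⟩
  apply Measure.ext_of_singleton
  intro x
  rw [map_G_singleton P hmeas, map_G_singleton P hmeas]
  match x with
  | 0 =>
    rw [prob_G_zero P hmeas hident hα h01 hindep hsum,
      prob_G_zero P hmeas hident hα h01 hindep hsum]
  | b + 1 =>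
    rw [prob_G_eq_succ P hmeas hident hα h01 hindep hsum,
      prob_G_eq_succ P hmeas hident hα h01 hindep hsum]

include h01 in
lemma tsum_mul_qe (hsum : Summable fun j : ℕ => ppi α (j + 1)) :
    ∑' n : ℕ, ((n : ℝ≥0∞) + 1) * qe α n = ∑' k : ℕ, ENNReal.ofReal (ppi α k) := by
  have h1 : ∀ n : ℕ, ((n : ℝ≥0∞) + 1) * qe α n
      = ∑' k : ℕ, (if k ≤ n then qe α n else 0) := by
    intro n
    rw [tsum_eq_sum (s := range (n + 1))
      (fun k hk => if_neg (by rw [Finset.mem_range] at hk; omega))]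
    rw [Finset.sum_congr rfl
      (fun k hk => if_pos (by rw [Finset.mem_range] at hk; omega))]
    rw [Finset.sum_const, Finset.card_range, nsmul_eq_mul]
    congr 1
    push_cast
    ring
  rw [tsum_congr h1, ENNReal.tsum_comm]
  apply tsum_congr
  intro k
  rw [← tsum_qe_tail h01 hsum k]
  have hinj : Function.Injective (fun b : ℕ => k + b) := fun x y h => by
    simpa using h
  have hsupp : Function.support (fun n : ℕ => if k ≤ n then qe α n else 0)
      ⊆ Set.range (fun b : ℕ => k + b) := by
    intro n hn
    rw [Function.mem_support] at hn
    by_cases h : k ≤ n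
    · exact ⟨n - k, by show k + (n - k) = n; omega⟩
    · rw [if_neg h] at hn; exact absurd rfl hn
  have heq := hinj.tsum_eq hsupp
  rw [← heq]
  apply tsum_congr
  intro b
  rw [if_pos (by omega)]

include hmeas hident hα h01 hindep in
lemma lintegral_G_cast (hsum : Summable fun j : ℕ => ppi α (j + 1)) :
    ∫⁻ ω, (G R 0 ω : ℝ≥0∞) ∂P = ∑' k : ℕ, ENNReal.ofReal (ppi α k) := by
  have h1 : ∫⁻ ω, (G R 0 ω : ℝ≥0∞) ∂P
      = ∫⁻ n, (n : ℝ≥0∞) ∂(Measure.map (G R 0) P) :=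
    (lintegral_map measurable_from_nat (measurable_G hmeas 0)).symm
  rw [h1, lintegral_countable']
  have h2 : ∀ n : ℕ, (n : ℝ≥0∞) * Measure.map (G R 0) P {n}
      = (n : ℝ≥0∞) * P {ω | G R 0 ω = n} := fun n => by
    rw [map_G_singleton P hmeas]
  rw [tsum_congr h2, tsum_eq_zero_add' ENNReal.summable]
  simp only [Nat.cast_zero, zero_mul, zero_add]
  have h3 : ∀ n : ℕ, ((n + 1 : ℕ) : ℝ≥0∞) * P {ω | G R 0 ω = n + 1}
      = ((n : ℝ≥0∞) + 1) * qe α n := fun n => by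
    rw [prob_G_eq_succ P hmeas hident hα h01 hindep hsum]
    congr 1
    push_cast
    ring
  rw [tsum_congr h3, tsum_mul_qe h01 hsum]


include hmeas hident hα h01 hindep in
lemma integrable_G (hsum : Summable fun j : ℕ => ppi α (j + 1))
    (hsum' : Summable (ppi α)) :
    Integrable (fun ω => (G R 0 ω : ℝ)) P := by
  have hsm : AEStronglyMeasurable (fun ω => (G R 0 ω : ℝ)) P :=
    (measurable_from_nat.comp (measurable_G hmeas 0)).aestronglyMeasurable
  refine ⟨hsm, ?_⟩
  rw [hasFiniteIntegral_iff_ofReal (Eventually.of_forall fun ω => Nat.cast_nonneg _)]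
  have heq : ∀ ω, ENNReal.ofReal ((G R 0 ω : ℕ) : ℝ) = ((G R 0 ω : ℕ) : ℝ≥0∞) :=
    fun ω => ENNReal.ofReal_natCast _
  rw [lintegral_congr heq, lintegral_G_cast P hmeas hident hα h01 hindep hsum,
    ← ENNReal.ofReal_tsum_of_nonneg (fun n => ppi_nonneg h01 n) hsum']
  exact ENNReal.ofReal_lt_top

include hmeas hident hα h01 hindep in
lemma integral_G (hsum : Summable fun j : ℕ => ppi α (j + 1))
    (hsum' : Summable (ppi α)) :
    ∫ ω, (G R 0 ω : ℝ) ∂P = ∑' k : ℕ, ppi α k := by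
  have hsm : AEStronglyMeasurable (fun ω => (G R 0 ω : ℝ)) P :=
    (measurable_from_nat.comp (measurable_G hmeas 0)).aestronglyMeasurable
  rw [integral_eq_lintegral_of_nonneg_ae (Eventually.of_forall fun ω => Nat.cast_nonneg _) hsm]
  have heq : ∀ ω, ENNReal.ofReal ((G R 0 ω : ℕ) : ℝ) = ((G R 0 ω : ℕ) : ℝ≥0∞) :=
    fun ω => ENNReal.ofReal_natCast _
  rw [lintegral_congr heq, lintegral_G_cast P hmeas hident hα h01 hindep hsum,
    ← ENNReal.ofReal_tsum_of_nonneg (fun n => ppi_nonneg h01 n) hsum',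
    ENNReal.toReal_ofReal (tsum_nonneg fun n => ppi_nonneg h01 n)]


end Prob

/-! ### deterministic lemmas -/

lemma corr (R : ℕ → Ω → ℕ) (ω : Ω) (hgood : ∀ k, G R k ω ≠ 0)
    (ζ : ℕ → Ω → Bool) (hζ0 : ζ 0 ω = true)
    (hζ : ∀ n : ℕ, 0 < n → (ζ n ω = true ↔ ∃ m < n, ζ m ω = true ∧ n - m ≤ R n ω)) :
    ∀ n, ζ n ω = true ↔ ∃ k, T R k ω = n := by
  have hsm : StrictMono (fun k => T R k ω) := by
    apply strictMono_nat_of_lt_succ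
    intro k
    have := hgood k
    rw [T_succ]
    unfold G at this ⊢
    omega
  intro n
  induction n using Nat.strong_induction_on with
  | _ n ih =>
    match n with
    | 0 => simp only [hζ0, true_iff]; exact ⟨0, rfl⟩
    | n + 1 =>
      set K := Nat.findGreatest (fun k => T R k ω ≤ n) n with hK
      have hfK : T R K ω ≤ n :=
        Nat.findGreatest_spec (P := fun k => T R k ω ≤ n) (Nat.zero_le n)
          (by show T R 0 ω ≤ n; show (0 : ℕ) ≤ n; omega)
      have hfK1 : n < T R (K + 1) ω := by
        by_contra hcon
        push_neg at hcon
        have hb : K + 1 ≤ n := le_trans (hsm.le_apply) hcon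
        have := Nat.le_findGreatest (P := fun k => T R k ω ≤ n) hb hcon
        omega
      have hζM : ζ (T R K ω) ω = true := by
        rcases Nat.eq_zero_or_pos (T R K ω) with h0 | hpos
        · rw [h0]; exact hζ0
        · exact (ih (T R K ω) (by omega)).2 ⟨K, rfl⟩
      have hle : ∀ m, m < n + 1 → ζ m ω = true → m ≤ T R K ω := by
        intro m hm hζm
        obtain ⟨k, hk⟩ := (ih m hm).1 hζm
        have hkK : k ≤ K := by
          by_contra hcon
          push_neg at hcon
          have : T R (K + 1) ω ≤ T R k ω := hsm.monotone hcon
          omega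
        have := hsm.monotone hkK
        omega
      have hMn : T R K ω < n + 1 := by omega
      have hclaim : ∀ j, 1 ≤ j → j < n + 1 - T R K ω → R (T R K ω + j) ω < j := by
        intro j h1 hj
        by_contra hcon
        push_neg at hcon
        have hm' : T R K ω + j < n + 1 := by omega
        have hζm' : ζ (T R K ω + j) ω = true := by
          rw [hζ _ (by omega)]
          exact ⟨T R K ω, by omega, hζM, by
            have : T R K ω + j - T R K ω = j := by omega
            rw [this]; exact hcon⟩
        have := hle _ hm' hζm'
        omega
      constructor
      · intro hn
        obtain ⟨m, hm, hζm, hRm⟩ := (hζ (n + 1) (by omega)).1 hn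
        have hmM := hle m hm hζm
        have hRM : n + 1 - T R K ω ≤ R (n + 1) ω := by
          have : n + 1 - T R K ω ≤ n + 1 - m := by omega
          omega
        have hgap : gap R (T R K ω) ω = n + 1 - T R K ω := by
          have hpos : 1 ≤ n + 1 - T R K ω := by omega
          obtain ⟨d, hd⟩ : ∃ d, n + 1 - T R K ω = d + 1 := ⟨n - T R K ω, by omega⟩
          rw [hd]
          rw [gap_eq_succ_iff]
          constructor
          · intro j hj1 hj2
            exact hclaim j hj1 (by omega)
          · have harg : T R K ω + (d + 1) = n + 1 := by omega
            rw [harg]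
            omega
        exact ⟨K + 1, by rw [T_succ]; unfold G; omega⟩
      · rintro ⟨k, hk⟩
        have hkK1 : T R (K + 1) ω = n + 1 := by
          have h1 : K < k := by
            by_contra hcon
            push_neg at hcon
            have := hsm.monotone hcon
            omega
          have h2 : K + 1 ≤ k := h1
          have := hsm.monotone h2
          omega
        have hgap : gap R (T R K ω) ω = n + 1 - T R K ω := by
          rw [T_succ] at hkK1
          unfold G at hkK1
          omega
        have hmem : (n + 1 - T R K ω) ∈ {j | 1 ≤ j ∧ j ≤ R (T R K ω + j) ω} := by
          have hne : {j | 1 ≤ j ∧ j ≤ R (T R K ω + j) ω}.Nonempty := by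
            by_contra hcon
            rw [Set.not_nonempty_iff_eq_empty] at hcon
            have : gap R (T R K ω) ω = 0 := by rw [gap, hcon, Nat.sInf_empty]
            omega
          have := Nat.sInf_mem hne
          rw [show sInf {j | 1 ≤ j ∧ j ≤ R (T R K ω + j) ω} = gap R (T R K ω) ω from rfl,
            hgap] at this
          exact this
        rw [hζ (n + 1) (by omega)]
        refine ⟨T R K ω, by omega, hζM, ?_⟩
        have := hmem.2
        have harg : T R K ω + (n + 1 - T R K ω) = n + 1 := by omega
        rwa [harg] at this

lemma aux_count (f : ℕ → ℕ) (h0 : f 0 = 0) (hsm : StrictMono f) (n : ℕ)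
    (p : ℕ → Prop) [DecidablePred p] (hp : ∀ i, p i ↔ ∃ k, f k = i) :
    ((Finset.Icc 1 n).filter p).card = Nat.findGreatest (fun k => f k ≤ n) n := by
  set K := Nat.findGreatest (fun k => f k ≤ n) n with hK
  have hfK : f K ≤ n :=
    Nat.findGreatest_spec (P := fun k => f k ≤ n) (Nat.zero_le n)
      (by show f 0 ≤ n; omega)
  have himg : (Finset.Icc 1 n).filter p = (Finset.Icc 1 K).image f := by
    ext i
    simp only [Finset.mem_filter, Finset.mem_Icc, Finset.mem_image]
    constructor
    · rintro ⟨⟨h1, h2⟩, hpi⟩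
      obtain ⟨k, hk⟩ := (hp i).1 hpi
      have hk1 : 1 ≤ k := by
        rcases Nat.eq_zero_or_pos k with rfl | h
        · omega
        · omega
      have hkn : k ≤ n := le_trans hsm.le_apply (by omega)
      have hkK : k ≤ K := Nat.le_findGreatest (P := fun k => f k ≤ n) hkn (by omega)
      exact ⟨k, ⟨hk1, hkK⟩, hk⟩
    · rintro ⟨k, ⟨hk1, hk2⟩, hk⟩
      have h1 : k ≤ f k := hsm.le_apply
      have h2 : f k ≤ n := le_trans (hsm.monotone hk2) hfK
      exact ⟨⟨by omega, by omega⟩, (hp i).2 ⟨k, hk⟩⟩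
  rw [himg, Finset.card_image_of_injective _ hsm.injective, Nat.card_Icc]
  omega

lemma aux_tendsto_gen (f : ℕ → ℕ) (K : ℕ → ℕ) (hfK : ∀ n, f (K n) ≤ n)
    (hfK1 : ∀ n, n < f (K n + 1)) (hKtop : Tendsto K atTop atTop) (L : ℝ) (hL : 1 ≤ L)
    (hlim : Tendsto (fun k : ℕ => (f k : ℝ) / k) atTop (𝓝 L)) :
    Tendsto (fun n : ℕ => ((K n : ℕ) : ℝ) / n) atTop (𝓝 (1 / L)) := by
  have hL0 : L ≠ 0 := by linarith
  have hA : Tendsto (fun n => (f (K n) : ℝ) / (K n)) atTop (𝓝 L) := hlim.comp hKtop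
  have hB : Tendsto (fun n => (f (K n + 1) : ℝ) / ((K n : ℝ) + 1)) atTop (𝓝 L) := by
    have h1 : Tendsto (fun n => (f (K n + 1) : ℝ) / ((K n + 1 : ℕ) : ℝ)) atTop (𝓝 L) :=
      hlim.comp ((tendsto_add_atTop_nat 1).comp hKtop)
    apply h1.congr
    intro n
    push_cast
    ring
  have hC : Tendsto (fun n => ((K n : ℝ) + 1) / (K n)) atTop (𝓝 1) := by
    have h1 : Tendsto (fun k : ℕ => ((k : ℝ) + 1) / k) atTop (𝓝 1) := by
      have h2 : Tendsto (fun k : ℕ => 1 + 1 / (k : ℝ)) atTop (𝓝 (1 + 0)) :=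
        tendsto_const_nhds.add tendsto_one_div_atTop_nhds_zero_nat
      rw [add_zero] at h2
      apply h2.congr'
      filter_upwards [eventually_ge_atTop 1] with k hk
      have hk0 : (k : ℝ) ≠ 0 := by positivity
      field_simp
    exact h1.comp hKtop
  have hmain : Tendsto (fun n : ℕ => (n : ℝ) / (K n : ℝ)) atTop (𝓝 L) := by
    have hBC : Tendsto
        (fun n => (f (K n + 1) : ℝ) / ((K n : ℝ) + 1) * (((K n : ℝ) + 1) / (K n)))
        atTop (𝓝 (L * 1)) := hB.mul hC
    rw [mul_one] at hBC
    apply tendsto_of_tendsto_of_tendsto_of_le_of_le' hA hBC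
    · filter_upwards [hKtop.eventually_ge_atTop 1] with n hn
      have hKpos : (0 : ℝ) < (K n : ℝ) := by exact_mod_cast hn
      apply div_le_div_of_nonneg_right ?_ hKpos.le
      exact_mod_cast hfK n
    · filter_upwards [hKtop.eventually_ge_atTop 1] with n hn
      have hKpos : (0 : ℝ) < (K n : ℝ) := by exact_mod_cast hn
      have hK1 : (K n : ℝ) + 1 ≠ 0 := by positivity
      have hprod : (f (K n + 1) : ℝ) / ((K n : ℝ) + 1) * (((K n : ℝ) + 1) / (K n))
          = (f (K n + 1) : ℝ) / (K n) := by
        field_simp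
      rw [hprod]
      apply div_le_div_of_nonneg_right ?_ hKpos.le
      have := hfK1 n
      exact_mod_cast this.le
  have hfin := hmain.inv₀ hL0
  rw [show (1 : ℝ) / L = L⁻¹ by rw [one_div]]
  apply hfin.congr
  intro n
  rw [inv_div]

lemma aux_tendsto (f : ℕ → ℕ) (h0 : f 0 = 0) (hsm : StrictMono f) (L : ℝ) (hL : 1 ≤ L)
    (hlim : Tendsto (fun k : ℕ => (f k : ℝ) / k) atTop (𝓝 L)) :
    Tendsto (fun n : ℕ => ((Nat.findGreatest (fun k => f k ≤ n) n : ℕ) : ℝ) / n) atTop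
      (𝓝 (1 / L)) := by
  apply aux_tendsto_gen f (fun n => Nat.findGreatest (fun k => f k ≤ n) n) ?_ ?_ ?_ L hL hlim
  · intro n
    exact Nat.findGreatest_spec (P := fun k => f k ≤ n) (Nat.zero_le n)
      (by show f 0 ≤ n; omega)
  · intro n
    by_contra hcon
    push_neg at hcon
    have hb : Nat.findGreatest (fun k => f k ≤ n) n + 1 ≤ n := le_trans hsm.le_apply hcon
    have := Nat.le_findGreatest (P := fun k => f k ≤ n) hb hcon
    omega
  · rw [tendsto_atTop_atTop]
    intro b
    refine ⟨f b, fun n hn => ?_⟩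
    exact Nat.le_findGreatest (P := fun k => f k ≤ n) (le_trans hsm.le_apply hn) hn

end RumorFW

/-- law of large numbers for the Reverse Firework process: if
`μ = 1 + ∑_{j≥1} ∏_{i=0}^{j-1} α_i < ∞`, then `N(n)/n → 1/μ` almost surely, where
`N(n)` is the number of spreaders among sites `1,...,n`. -/
theorem rumor_stmt_13 {Ω : Type*} [MeasurableSpace Ω] (P : Measure Ω) [IsProbabilityMeasure P]
    (R : ℕ → Ω → ℕ) (hmeas : ∀ i, Measurable (R i))
    (hindep : iIndepFun R P)
    (hident : ∀ i, Measure.map (R i) P = Measure.map (R 0) P)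
    (α : ℕ → ℝ) (hα : ∀ k, P {ω | R 0 ω ≤ k} = ENNReal.ofReal (α k))
    (hmono : Monotone α) (h01 : ∀ k, 0 ≤ α k ∧ α k ≤ 1) (hα0 : 0 < α 0 ∧ α 0 < 1)
    (ζ : ℕ → Ω → Bool)
    (hζ0 : ∀ ω, ζ 0 ω = true)
    (hζ : ∀ n : ℕ, 0 < n → ∀ ω,
      (ζ n ω = true ↔ ∃ m < n, ζ m ω = true ∧ n - m ≤ R n ω))
    (hsum : Summable fun j : ℕ => ∏ i ∈ Finset.range (j + 1), α i) :
    ∀ᵐ ω ∂P, Tendsto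
      (fun n : ℕ => (∑ i ∈ Finset.Icc 1 n, (if ζ i ω = true then (1 : ℝ) else 0)) / n)
      atTop
      (nhds (1 / (1 + ∑' j : ℕ, ∏ i ∈ Finset.range (j + 1), α i))) := by
  classical
  have hsum1 : Summable (fun j : ℕ => RumorFW.ppi α (j + 1)) := hsum
  have hsum' : Summable (RumorFW.ppi α) := (summable_nat_add_iff 1).1 hsum1
  set μR : ℝ := ∑' k, RumorFW.ppi α k with hμR
  have hμeq : 1 + (∑' j : ℕ, ∏ i ∈ Finset.range (j + 1), α i) = μR := by
    have hp0 : RumorFW.ppi α 0 = 1 := by simp [RumorFW.ppi]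
    rw [hμR, Summable.tsum_eq_zero_add hsum', hp0]
    rfl
  have hμ1 : 1 ≤ μR := by
    rw [← hμeq]
    have h0 : 0 ≤ ∑' j : ℕ, ∏ i ∈ Finset.range (j + 1), α i :=
      tsum_nonneg fun j => Finset.prod_nonneg fun i _ => (h01 i).1
    linarith
  have hint : Integrable (fun ω => (RumorFW.G R 0 ω : ℝ)) P :=
    RumorFW.integrable_G P hmeas hident hα h01 hindep hsum1 hsum'
  have hpair : Pairwise (Function.onFun (IndepFun · · P) (fun i ω => (RumorFW.G R i ω : ℝ))) := by
    intro i j hij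
    exact (RumorFW.indepFun_G P hmeas hident hα h01 hindep hsum1 hij).comp
      measurable_from_nat measurable_from_nat
  have hid : ∀ i, IdentDistrib (fun ω => (RumorFW.G R i ω : ℝ))
      (fun ω => (RumorFW.G R 0 ω : ℝ)) P P := fun i =>
    (RumorFW.identDistrib_G P hmeas hident hα h01 hindep hsum1 i).comp measurable_from_nat
  have hslln := strong_law_ae_real _ hint hpair hid
  rw [RumorFW.integral_G P hmeas hident hα h01 hindep hsum1 hsum'] at hslln
  have hgood : ∀ᵐ ω ∂P, ∀ k, RumorFW.G R k ω ≠ 0 := by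
    rw [ae_all_iff]
    intro k
    have h0 := RumorFW.prob_G_zero P hmeas hident hα h01 hindep hsum1 k
    rw [ae_iff]
    have hset : {ω | ¬ RumorFW.G R k ω ≠ 0} = {ω | RumorFW.G R k ω = 0} := by
      ext ω; simp
    rw [hset]
    exact h0
  filter_upwards [hslln, hgood] with ω hω hg
  have hsm : StrictMono (fun k => RumorFW.T R k ω) := by
    apply strictMono_nat_of_lt_succ
    intro k
    have := hg k
    rw [RumorFW.T_succ]
    omega
  have hlim : Tendsto (fun k : ℕ => ((RumorFW.T R k ω : ℕ) : ℝ) / k) atTop (𝓝 μR) := by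
    apply hω.congr
    intro n
    congr 1
    rw [RumorFW.T_eq_sum]
    push_cast
    rfl
  have hcorr := RumorFW.corr R ω hg ζ (hζ0 ω) (fun n hn => hζ n hn ω)
  have hμgoal : (1 : ℝ) / (1 + ∑' j : ℕ, ∏ i ∈ Finset.range (j + 1), α i) = 1 / μR := by
    rw [hμeq]
  rw [hμgoal]
  have hcnt : ∀ n : ℕ, (∑ i ∈ Finset.Icc 1 n, (if ζ i ω = true then (1 : ℝ) else 0))
      = ((Nat.findGreatest (fun k => RumorFW.T R k ω ≤ n) n : ℕ) : ℝ) := by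
    intro n
    rw [Finset.sum_boole]
    congr 1
    exact RumorFW.aux_count _ rfl hsm n _ hcorr
  have hfin := RumorFW.aux_tendsto (fun k => RumorFW.T R k ω) rfl hsm μR hμ1 hlim
  apply hfin.congr
  intro n
  rw [← hcnt n]
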